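/- Meyer-wavelet bound on the inverse operator norm: Suppose {e_k} and {φ_j} are orthonormal bases of a Hilbert space H₁ with ⟨φ_j, e_k⟩ = 0 whenever k ∉ [j/3 − 1, 2j], and suppose G : H₁ → H₂ is linear injective with G^T G e_k = ρ_k² e_k and ρ_k ≥ C(1 + k²)^{-α/2} for all k. Then g_n := max over unit vectors h ∈ span{φ₁,…,φ_n} of ‖(G^{-1})^T h‖² satisfies g_n ≤ C' (2n)^{2α} for some constant C' depending only on C and α. -/

import Mathlib

open scoped RealInnerProductSpace

/-- Meyer-wavelet bound on the inverse operator norm: if `⟪G e_k, G e_l⟫ = ρ_k² δ_{kl}`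
with `ρ_k ≥ C (1 + k²)^{-α/2}` (mildly ill-posed), and the basis `φ` satisfies the
band condition `⟪φ_j, e_k⟫ = 0` for `k ∉ [j/3 − 1, 2j]` (1-based indices), then
`g_n = max {‖(G⁻¹)ᵀ h‖² = ∑_k (⟨h, e_k⟩/ρ_k)² : h ∈ span{φ_1,…,φ_n}, ‖h‖ = 1}`
satisfies `g_n ≤ C' (2n)^{2α}` for some constant `C' > 0` depending only on `C, α`. -/
theorem stmt17 {H₁ H₂ : Type*} [NormedAddCommGroup H₁] [InnerProductSpace ℝ H₁]
    [CompleteSpace H₁] [NormedAddCommGroup H₂] [InnerProductSpace ℝ H₂]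
    (e φ : HilbertBasis ℕ ℝ H₁)
    (G : H₁ →ₗ[ℝ] H₂) (hGinj : Function.Injective G)
    (ρ : ℕ → ℝ) (hρpos : ∀ k, 0 < ρ k)
    (heig : ∀ k l, ⟪G (e k), G (e l)⟫ = if k = l then ρ k ^ 2 else 0)
    (α Cc : ℝ) (hα : 0 < α) (hCc : 0 < Cc)
    (hmild : ∀ k : ℕ, Cc * (1 + ((k : ℝ) + 1) ^ 2) ^ (-(α / 2)) ≤ ρ k)
    (hband : ∀ j k : ℕ,
      ((k : ℝ) + 1 < ((j : ℝ) + 1) / 3 - 1 ∨ 2 * ((j : ℝ) + 1) < (k : ℝ) + 1) →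
      ⟪φ j, e k⟫ = 0) :
    ∃ C' > (0 : ℝ), ∀ n : ℕ, ∀ h ∈ Submodule.span ℝ (φ '' Set.Iio n), ‖h‖ = 1 →
      ∑' k, (⟪h, e k⟫ / ρ k) ^ 2 ≤ C' * (2 * (n : ℝ)) ^ (2 * α) := by
  refine ⟨2 ^ α / Cc ^ 2, by positivity, ?_⟩
  intro n h hspan hnorm
  rcases Nat.eq_zero_or_pos n with rfl | hn
  · rw [show Set.Iio (0:ℕ) = ∅ by ext x; simp] at hspan
    simp only [Set.image_empty, Submodule.span_empty, Submodule.mem_bot] at hspan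
    subst hspan
    simp at hnorm
  -- coefficients vanish for k ≥ 2n
  have hzero : ∀ k : ℕ, 2 * n ≤ k → ⟪h, e k⟫ = 0 := by
    intro k hk
    have hK : Submodule.span ℝ (φ '' Set.Iio n) ≤
        LinearMap.ker ((innerSL ℝ (e k) : H₁ →L[ℝ] ℝ) : H₁ →ₗ[ℝ] ℝ) := by
      rw [Submodule.span_le]
      rintro x ⟨j, hj, rfl⟩
      simp only [Set.mem_Iio] at hj
      simp only [SetLike.mem_coe, LinearMap.mem_ker, ContinuousLinearMap.coe_coe,
        innerSL_apply_apply]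
      rw [real_inner_comm]
      apply hband j k
      right
      have h1 : 2 * (j + 1) ≤ k := by omega
      have : ((2 * (j + 1) : ℕ) : ℝ) ≤ (k : ℝ) := by exact_mod_cast h1
      push_cast at this
      linarith
    have := hK hspan
    simp only [LinearMap.mem_ker, ContinuousLinearMap.coe_coe, innerSL_apply_apply] at this
    rw [real_inner_comm]
    exact this
  -- Parseval
  have hsum : HasSum (fun k => ⟪h, e k⟫ ^ 2) 1 := by
    have := e.hasSum_inner_mul_inner h h
    have heq : ⟪h, h⟫ = 1 := by
      rw [real_inner_self_eq_norm_sq, hnorm]; norm_num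
    rw [heq] at this
    rw [show (fun k => ⟪h, e k⟫ ^ 2) = fun i => ⟪h, e i⟫ * ⟪e i, h⟫ from
      funext fun k => by rw [sq, real_inner_comm h (e k)]]
    exact this
  set M : ℝ := 2 ^ α / Cc ^ 2 * (2 * (n : ℝ)) ^ (2 * α) with hM
  have hMnonneg : 0 ≤ M := by
    apply mul_nonneg (by positivity)
    apply Real.rpow_nonneg
    positivity
  have hterm : ∀ k : ℕ, (⟪h, e k⟫ / ρ k) ^ 2 ≤ M * ⟪h, e k⟫ ^ 2 := by
    intro k
    rcases le_or_gt (2 * n) k with hk | hk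
    · rw [hzero k hk]
      simp
    · rw [div_pow]
      rw [div_le_iff₀ (pow_pos (hρpos k) 2)]
      have hρlb : Cc * (1 + ((k : ℝ) + 1) ^ 2) ^ (-(α / 2)) ≤ ρ k := hmild k
      have hbase : (0:ℝ) < 1 + ((k : ℝ) + 1) ^ 2 := by positivity
      have hρ2 : Cc ^ 2 * (1 + ((k : ℝ) + 1) ^ 2) ^ (-α) ≤ ρ k ^ 2 := by
        have hpos : (0:ℝ) ≤ Cc * (1 + ((k : ℝ) + 1) ^ 2) ^ (-(α / 2)) := by
          apply mul_nonneg hCc.le (Real.rpow_nonneg hbase.le _)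
        calc Cc ^ 2 * (1 + ((k : ℝ) + 1) ^ 2) ^ (-α)
            = (Cc * (1 + ((k : ℝ) + 1) ^ 2) ^ (-(α / 2))) ^ 2 := by
              rw [mul_pow, ← Real.rpow_natCast ((1 + ((k:ℝ)+1)^2) ^ (-(α/2))) 2,
                ← Real.rpow_mul hbase.le]
              norm_num
          _ ≤ ρ k ^ 2 := by
              apply pow_le_pow_left₀ hpos hρlb
      -- key: (1+(k+1)^2)^α ≤ 2^α * (2n)^(2α)
      have hk1 : (k : ℝ) + 1 ≤ 2 * (n : ℝ) := by
        have : (k : ℕ) + 1 ≤ 2 * n := by omega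
        exact_mod_cast this
      have h2n : (1:ℝ) ≤ 2 * (n : ℝ) := by
        have : (1:ℕ) ≤ 2 * n := by omega
        exact_mod_cast this
      have hup : (1 + ((k : ℝ) + 1) ^ 2) ≤ 2 * (2 * (n : ℝ)) ^ 2 := by
        have h1 : (1:ℝ) ≤ (2 * (n:ℝ)) ^ 2 := by nlinarith
        have h2 : ((k : ℝ) + 1) ^ 2 ≤ (2 * (n:ℝ)) ^ 2 := by nlinarith
        linarith
      have hpowle : (1 + ((k : ℝ) + 1) ^ 2) ^ α ≤ 2 ^ α * (2 * (n : ℝ)) ^ (2 * α) := by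
        calc (1 + ((k : ℝ) + 1) ^ 2) ^ α ≤ (2 * (2 * (n : ℝ)) ^ 2) ^ α :=
              Real.rpow_le_rpow hbase.le hup hα.le
          _ = 2 ^ α * (2 * (n : ℝ)) ^ (2 * α) := by
              rw [Real.mul_rpow (by norm_num) (by positivity),
                ← Real.rpow_natCast (2 * (n:ℝ)) 2, ← Real.rpow_mul (by positivity)]
              norm_num [mul_comm]
      calc ⟪h, e k⟫ ^ 2 = (1 + ((k : ℝ) + 1) ^ 2) ^ (-α) * (1 + ((k : ℝ) + 1) ^ 2) ^ α
            * ⟪h, e k⟫ ^ 2 := by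
            rw [← Real.rpow_add hbase]
            simp
        _ ≤ (1 + ((k : ℝ) + 1) ^ 2) ^ (-α) * (2 ^ α * (2 * (n : ℝ)) ^ (2 * α))
            * ⟪h, e k⟫ ^ 2 := by
            apply mul_le_mul_of_nonneg_right _ (sq_nonneg _)
            exact mul_le_mul_of_nonneg_left hpowle (Real.rpow_nonneg hbase.le _)
        _ ≤ M * ⟪h, e k⟫ ^ 2 * ρ k ^ 2 := by
            rw [hM]
            have hy : 0 ≤ (2:ℝ) ^ α * (2 * (n : ℝ)) ^ (2 * α) := by
              apply mul_nonneg (Real.rpow_nonneg (by norm_num) _)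
                (Real.rpow_nonneg (by positivity) _)
            have key : (1 + ((k : ℝ) + 1) ^ 2) ^ (-α) * (2 ^ α * (2 * (n : ℝ)) ^ (2 * α))
                * ⟪h, e k⟫ ^ 2 * Cc ^ 2
                ≤ 2 ^ α * (2 * (n : ℝ)) ^ (2 * α) * ⟪h, e k⟫ ^ 2 * ρ k ^ 2 := by
              nlinarith [mul_le_mul_of_nonneg_left hρ2 (mul_nonneg hy (sq_nonneg ⟪h, e k⟫))]
            have hCc2 : (0:ℝ) < Cc ^ 2 := pow_pos hCc 2
            calc (1 + ((k : ℝ) + 1) ^ 2) ^ (-α) * (2 ^ α * (2 * (n : ℝ)) ^ (2 * α))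
                  * ⟪h, e k⟫ ^ 2
                = (1 + ((k : ℝ) + 1) ^ 2) ^ (-α) * (2 ^ α * (2 * (n : ℝ)) ^ (2 * α))
                  * ⟪h, e k⟫ ^ 2 * Cc ^ 2 / Cc ^ 2 := by
                  rw [mul_div_cancel_right₀ _ hCc2.ne']
              _ ≤ 2 ^ α * (2 * (n : ℝ)) ^ (2 * α) * ⟪h, e k⟫ ^ 2 * ρ k ^ 2 / Cc ^ 2 :=
                  (div_le_div_iff_of_pos_right hCc2).mpr key
              _ = 2 ^ α / Cc ^ 2 * (2 * (n : ℝ)) ^ (2 * α) * ⟪h, e k⟫ ^ 2 * ρ k ^ 2 := by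
                  ring
  have hsummable : Summable (fun k => (⟪h, e k⟫ / ρ k) ^ 2) :=
    Summable.of_nonneg_of_le (fun k => sq_nonneg _) hterm
      (hsum.summable.mul_left M)
  calc ∑' k, (⟪h, e k⟫ / ρ k) ^ 2 ≤ ∑' k, M * ⟪h, e k⟫ ^ 2 :=
        Summable.tsum_le_tsum hterm hsummable (hsum.summable.mul_left M)
    _ = M * 1 := by rw [tsum_mul_left, hsum.tsum_eq]
    _ = 2 ^ α / Cc ^ 2 * (2 * (n : ℝ)) ^ (2 * α) := by rw [mul_one, hM]
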